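/- Let d ≥ 1, let k : ℝᵈ × ℝᵈ → ℝ be measurable with ‖k‖_{L²} := sup_x (∫_{ℝᵈ} k(x, x−y)² dy)^{1/2} < ∞, let P and Q be Borel probability measures on ℝᵈ such that x ↦ k(x,y) is P-integrable and Q-integrable for every y, let g : ℝᵈ → ℝ be measurable with (∫ g²)^{1/2} ≤ 1, and let R ≥ 0 and a, b ≥ 0 with a + b = 1. Then |∫_{ℝᵈ} g(y)(Pk(y) − Qk(y)) dy| ≤ sup_{y∈ℝᵈ} |Pk(y) − Qk(y)| · Vol(R)^{1/2} + 2 τ_k(aR) + 2 ‖k‖_{L²} · max(τ_P(bR), τ_Q(bR)), where Vol(R) := π^{d/2} R^d / Γ(d/2 + 1) is the volume of the Euclidean ball of radius R in ℝᵈ. -/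

import Mathlib

open MeasureTheory

/-- The mean embedding of a probability measure `P` under the kernel `h`:
`Ph(y) = ∫ h(x,y) dP(x)`. -/
noncomputable def meanEmbed {d : ℕ}
    (P : Measure (EuclideanSpace ℝ (Fin d)))
    (h : EuclideanSpace ℝ (Fin d) → EuclideanSpace ℝ (Fin d) → ℝ)
    (y : EuclideanSpace ℝ (Fin d)) : ℝ :=
  ∫ x, h x y ∂P

/-- The kernel tail `τ_h(R) = sup_x (∫_{‖y‖ ≥ R} h(x, x−y)² dy)^{1/2}`. -/
noncomputable def kernelTail {d : ℕ}
    (h : EuclideanSpace ℝ (Fin d) → EuclideanSpace ℝ (Fin d) → ℝ) (R : ℝ) : ℝ :=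
  ⨆ x, Real.sqrt (∫ y in {y : EuclideanSpace ℝ (Fin d) | R ≤ ‖y‖}, (h x (x - y)) ^ 2)

/-- The measure tail `τ_P(R) = P({x : ‖x‖ ≥ R})`. -/
noncomputable def measTail {d : ℕ} (P : Measure (EuclideanSpace ℝ (Fin d))) (R : ℝ) : ℝ :=
  (P {x | R ≤ ‖x‖}).toReal

section Aux

variable {d : ℕ}

local notation "E" => EuclideanSpace ℝ (Fin d)

lemma aux_sq_rpow (t : ℝ) : (ENNReal.ofReal |t|) ^ (2:ℝ) = ENNReal.ofReal (t ^ 2) := by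
  rw [ENNReal.ofReal_rpow_of_nonneg (abs_nonneg t) (by norm_num)]
  congr 1
  rw [show (2:ℝ) = ((2:ℕ):ℝ) by norm_num, Real.rpow_natCast, sq_abs]

lemma aux_conj : Real.HolderConjugate 2 2 := Real.HolderConjugate.two_two

/-- kernel tail terms are bounded by `KL2`. -/
lemma aux_kt_le (k : E → E → ℝ)
    (hL2int : ∀ x, Integrable (fun y => (k x (x - y)) ^ 2))
    (KL2 : ℝ) (hKL2 : ∀ x, Real.sqrt (∫ y, (k x (x - y)) ^ 2) ≤ KL2) (r : ℝ) (x : E) :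
    Real.sqrt (∫ y in {y : E | r ≤ ‖y‖}, (k x (x - y)) ^ 2) ≤ KL2 :=
  le_trans (Real.sqrt_le_sqrt (setIntegral_le_integral (hL2int x)
    (Filter.Eventually.of_forall fun y => sq_nonneg _))) (hKL2 x)

/-- The key tail bound for one measure. -/
lemma aux_tail_bound
    (k : E → E → ℝ) (hmeas : Measurable (Function.uncurry k))
    (hL2int : ∀ x, Integrable (fun y => (k x (x - y)) ^ 2))
    (KL2 : ℝ) (hKL2 : ∀ x, Real.sqrt (∫ y, (k x (x - y)) ^ 2) ≤ KL2)
    (P : Measure E) [IsProbabilityMeasure P]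
    (hPint : ∀ y, Integrable (fun x => k x y) P)
    (g : E → ℝ) (hgmeas : Measurable g)
    (hgsqint : Integrable (fun y => (g y) ^ 2))
    (hg : (∫ y, (g y) ^ 2) ≤ 1)
    (R a b : ℝ) (hab : a + b = 1) :
    ∫⁻ y in (Metric.closedBall (0:E) R)ᶜ, ENNReal.ofReal (|g y| * |meanEmbed P k y|)
      ≤ ENNReal.ofReal (kernelTail k (a * R) + KL2 * measTail P (b * R)) := by
  classical
  set B : Set E := Metric.closedBall (0:E) R with hB
  have hKL2_0 : 0 ≤ KL2 := (Real.sqrt_nonneg _).trans (hKL2 0)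
  have hτ0 : 0 ≤ kernelTail k (a * R) := Real.iSup_nonneg fun x => Real.sqrt_nonneg _
  have hkm : ∀ x : E, Measurable (k x) := fun x => hmeas.of_uncurry_left
  have hxkm : ∀ x : E, Measurable (fun y : E => k x (x - y)) := fun x =>
    (hkm x).comp (measurable_const.sub measurable_id)
  -- integrability of y ↦ k x y ^ 2
  have hkInt : ∀ x : E, Integrable (fun y => (k x y) ^ 2) := by
    intro x
    have h := (Measure.measurePreserving_sub_left volume x).integrable_comp
      (g := fun y => (k x y) ^ 2) (((hkm x).pow_const 2).aestronglyMeasurable)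
    exact h.mp (hL2int x)
  have hshift : ∀ x : E, ∫ z, (k x (x - z)) ^ 2 = ∫ y, (k x y) ^ 2 := fun x =>
    integral_sub_left_eq_self (fun y => (k x y) ^ 2) volume x
  -- the per-x tail quantity
  set T : E → ℝ := fun x => Real.sqrt (∫ y in Bᶜ, (k x y) ^ 2) with hT
  have hT_KL2 : ∀ x, T x ≤ KL2 := by
    intro x
    refine le_trans (Real.sqrt_le_sqrt (setIntegral_le_integral (hkInt x)
      (Filter.Eventually.of_forall fun y => sq_nonneg _))) ?_
    rw [← hshift x]; exact hKL2 x
  have hbdd : BddAbove (Set.range fun x : E =>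
      Real.sqrt (∫ y in {y : E | a * R ≤ ‖y‖}, (k x (x - y)) ^ 2)) :=
    ⟨KL2, by rintro _ ⟨x, rfl⟩; exact aux_kt_le k hL2int KL2 hKL2 _ x⟩
  have hT_tail : ∀ x : E, ‖x‖ ≤ b * R → T x ≤ kernelTail k (a * R) := by
    intro x hx
    have hSmeas : MeasurableSet {z : E | a * R ≤ ‖z‖} :=
      measurableSet_le measurable_const measurable_norm
    have key : ∫ y in Bᶜ, (k x y) ^ 2 ≤ ∫ z in {z : E | a * R ≤ ‖z‖}, (k x (x - z)) ^ 2 := by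
      have e1 : ∫ y in Bᶜ, (k x y) ^ 2
          = ∫ z, Set.indicator Bᶜ (fun y => (k x y) ^ 2) (x - z) := by
        rw [integral_sub_left_eq_self (Set.indicator Bᶜ fun y => (k x y) ^ 2) volume x,
          integral_indicator (measurableSet_closedBall.compl)]
      have e2 : ∫ z in {z : E | a * R ≤ ‖z‖}, (k x (x - z)) ^ 2
          = ∫ z, Set.indicator {z : E | a * R ≤ ‖z‖} (fun z => (k x (x - z)) ^ 2) z := by
        rw [integral_indicator hSmeas]
      rw [e1, e2]
      refine integral_mono_of_nonneg (Filter.Eventually.of_forall fun z =>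
        Set.indicator_nonneg (fun y _ => sq_nonneg _) _)
        ((hL2int x).indicator hSmeas) (Filter.Eventually.of_forall fun z => ?_)
      by_cases hz : x - z ∈ Bᶜ
      · have hz' : z ∈ {z : E | a * R ≤ ‖z‖} := by
          have h1 : R < ‖x - z‖ := by
            simpa [hB, Metric.mem_closedBall, dist_zero_right, not_le] using hz
          have h2 : ‖x - z‖ ≤ ‖x‖ + ‖z‖ := norm_sub_le _ _
          have hab' : a * R + b * R = R := by rw [← add_mul, hab, one_mul]
          show a * R ≤ ‖z‖
          linarith
        simp only [Set.indicator_of_mem hz, Set.indicator_of_mem hz', le_refl]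
      · simp only [Set.indicator_of_notMem hz]
        exact Set.indicator_nonneg (fun y _ => sq_nonneg _) _
    refine le_trans (Real.sqrt_le_sqrt key) ?_
    exact le_ciSup hbdd x
  -- main chain
  have hPkabs : ∀ y : E, |meanEmbed P k y| ≤ ∫ x, |k x y| ∂P := by
    intro y
    simpa [meanEmbed, Real.norm_eq_abs] using
      norm_integral_le_integral_norm (fun x => k x y) (μ := P)
  have step1 : ∫⁻ y in Bᶜ, ENNReal.ofReal (|g y| * |meanEmbed P k y|)
      ≤ ∫⁻ y in Bᶜ, ∫⁻ x, ENNReal.ofReal |g y| * ENNReal.ofReal |k x y| ∂P := by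
    refine lintegral_mono fun y => ?_
    rw [ENNReal.ofReal_mul (abs_nonneg _),
      lintegral_const_mul' _ _ ENNReal.ofReal_ne_top]
    refine mul_le_mul_right ?_ _
    rw [← ofReal_integral_eq_lintegral_ofReal (hPint y).abs
      (Filter.Eventually.of_forall fun x => abs_nonneg _)]
    exact ENNReal.ofReal_le_ofReal (hPkabs y)
  have hswap : ∫⁻ y in Bᶜ, ∫⁻ x, ENNReal.ofReal |g y| * ENNReal.ofReal |k x y| ∂P
      = ∫⁻ x, (∫⁻ y in Bᶜ, ENNReal.ofReal |g y| * ENNReal.ofReal |k x y|) ∂P := by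
    have hm2 : Measurable (Function.uncurry fun (y x : E) =>
        ENNReal.ofReal |g y| * ENNReal.ofReal |k x y|) :=
      ((ENNReal.measurable_ofReal.comp ((hgmeas.comp measurable_fst).abs)).mul
        (ENNReal.measurable_ofReal.comp ((hmeas.comp measurable_swap).abs)))
    exact lintegral_lintegral_swap (μ := volume.restrict Bᶜ) (ν := P) hm2.aemeasurable
  have hJ : ∀ x : E, (∫⁻ y in Bᶜ, ENNReal.ofReal |g y| * ENNReal.ofReal |k x y|)
      ≤ ENNReal.ofReal (T x) := by
    intro x
    have hH := ENNReal.lintegral_mul_le_Lp_mul_Lq (volume.restrict Bᶜ) aux_conj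
      (f := fun y => ENNReal.ofReal |g y|) (g := fun y => ENNReal.ofReal |k x y|)
      (ENNReal.measurable_ofReal.comp hgmeas.abs).aemeasurable
      (ENNReal.measurable_ofReal.comp ((hkm x).abs)).aemeasurable
    refine le_trans hH ?_
    have hf1 : (∫⁻ y in Bᶜ, (ENNReal.ofReal |g y|) ^ (2:ℝ)) ^ (1/(2:ℝ)) ≤ 1 := by
      refine ENNReal.rpow_le_one ?_ (by norm_num)
      calc ∫⁻ y in Bᶜ, (ENNReal.ofReal |g y|) ^ (2:ℝ)
          = ∫⁻ y in Bᶜ, ENNReal.ofReal ((g y) ^ 2) := by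
            simp_rw [aux_sq_rpow]
        _ ≤ ∫⁻ y, ENNReal.ofReal ((g y) ^ 2) := setLIntegral_le_lintegral _ _
        _ = ENNReal.ofReal (∫ y, (g y) ^ 2) :=
            (ofReal_integral_eq_lintegral_ofReal hgsqint
              (Filter.Eventually.of_forall fun y => sq_nonneg _)).symm
        _ ≤ ENNReal.ofReal 1 := ENNReal.ofReal_le_ofReal hg
        _ = 1 := ENNReal.ofReal_one
    have hf2 : (∫⁻ y in Bᶜ, (ENNReal.ofReal |k x y|) ^ (2:ℝ)) ^ (1/(2:ℝ))
        = ENNReal.ofReal (T x) := by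
      have e : ∫⁻ y in Bᶜ, (ENNReal.ofReal |k x y|) ^ (2:ℝ)
          = ENNReal.ofReal (∫ y in Bᶜ, (k x y) ^ 2) := by
        simp_rw [aux_sq_rpow]
        exact (ofReal_integral_eq_lintegral_ofReal ((hkInt x).integrableOn)
          (Filter.Eventually.of_forall fun y => sq_nonneg _)).symm
      rw [e, ENNReal.ofReal_rpow_of_nonneg (integral_nonneg fun y => sq_nonneg _) (by norm_num),
        hT, ← Real.sqrt_eq_rpow]
    calc (∫⁻ y in Bᶜ, (ENNReal.ofReal |g y|) ^ (2:ℝ)) ^ (1/(2:ℝ))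
          * (∫⁻ y in Bᶜ, (ENNReal.ofReal |k x y|) ^ (2:ℝ)) ^ (1/(2:ℝ))
        ≤ 1 * ENNReal.ofReal (T x) := by
          rw [hf2]; exact mul_le_mul_left hf1 _
      _ = ENNReal.ofReal (T x) := one_mul _
  set ψ : E → ENNReal := fun x => ENNReal.ofReal (kernelTail k (a * R)) +
    Set.indicator {x : E | b * R ≤ ‖x‖} (fun _ => ENNReal.ofReal KL2) x with hψ
  have hJψ : ∀ x : E, (∫⁻ y in Bᶜ, ENNReal.ofReal |g y| * ENNReal.ofReal |k x y|) ≤ ψ x := by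
    intro x
    refine le_trans (hJ x) ?_
    by_cases hx : ‖x‖ ≤ b * R
    · exact le_trans (ENNReal.ofReal_le_ofReal (hT_tail x hx)) le_self_add
    · have hmem : x ∈ {x : E | b * R ≤ ‖x‖} := le_of_lt (not_le.mp hx)
      rw [hψ]
      simp only [Set.indicator_of_mem hmem]
      exact le_trans (ENNReal.ofReal_le_ofReal (hT_KL2 x)) le_add_self
  have hSmeas : MeasurableSet {x : E | b * R ≤ ‖x‖} :=
    measurableSet_le measurable_const measurable_norm
  have hψint : ∫⁻ x, ψ x ∂P = ENNReal.ofReal (kernelTail k (a * R)) +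
      ENNReal.ofReal KL2 * P {x : E | b * R ≤ ‖x‖} := by
    rw [hψ, lintegral_add_left measurable_const, lintegral_const,
      lintegral_indicator hSmeas, setLIntegral_const]
    simp [mul_comm]
  calc ∫⁻ y in Bᶜ, ENNReal.ofReal (|g y| * |meanEmbed P k y|)
      ≤ ∫⁻ y in Bᶜ, ∫⁻ x, ENNReal.ofReal |g y| * ENNReal.ofReal |k x y| ∂P := step1
    _ = ∫⁻ x, (∫⁻ y in Bᶜ, ENNReal.ofReal |g y| * ENNReal.ofReal |k x y|) ∂P := hswap
    _ ≤ ∫⁻ x, ψ x ∂P := lintegral_mono (μ := P) hJψ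
    _ = ENNReal.ofReal (kernelTail k (a * R)) + ENNReal.ofReal KL2 * P {x : E | b * R ≤ ‖x‖} :=
        hψint
    _ = ENNReal.ofReal (kernelTail k (a * R) + KL2 * measTail P (b * R)) := by
        simp only [measTail]
        rw [ENNReal.ofReal_add hτ0 (mul_nonneg hKL2_0 ENNReal.toReal_nonneg),
          ENNReal.ofReal_mul hKL2_0, ENNReal.ofReal_toReal (measure_ne_top P _)]

end Aux

/-- Relating kernel integral error with L∞ error: for `‖g‖_{L²} ≤ 1`,
`sup_x (∫ k(x,x−y)² dy)^{1/2} ≤ K_{L²}`, a uniform bound `S` on `|Pk − Qk|`,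
`R ≥ 0`, and `a + b = 1` with `a, b ≥ 0`,
`|∫ g(y)(Pk(y) − Qk(y)) dy| ≤ S · Vol(R)^{1/2} + 2τ_k(aR) + 2K_{L²} max(τ_P(bR), τ_Q(bR))`,
where `Vol(R) = π^{d/2} R^d / Γ(d/2+1)`. -/
theorem kernel_integral_error_le_linf_error {d : ℕ} (hd : 1 ≤ d)
    (k : EuclideanSpace ℝ (Fin d) → EuclideanSpace ℝ (Fin d) → ℝ)
    (hmeas : Measurable (Function.uncurry k))
    (hL2int : ∀ x, Integrable (fun y => (k x (x - y)) ^ 2))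
    (KL2 : ℝ) (hKL2 : ∀ x, Real.sqrt (∫ y, (k x (x - y)) ^ 2) ≤ KL2)
    (P Q : Measure (EuclideanSpace ℝ (Fin d)))
    [IsProbabilityMeasure P] [IsProbabilityMeasure Q]
    (hPint : ∀ y, Integrable (fun x => k x y) P)
    (hQint : ∀ y, Integrable (fun x => k x y) Q)
    (g : EuclideanSpace ℝ (Fin d) → ℝ) (hgmeas : Measurable g)
    (hgsqint : Integrable (fun y => (g y) ^ 2))
    (hg : (∫ y, (g y) ^ 2) ≤ 1)
    (R a b : ℝ) (hR : 0 ≤ R) (ha : 0 ≤ a) (hb : 0 ≤ b) (hab : a + b = 1)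
    (S : ℝ) (hS : ∀ y, |meanEmbed P k y - meanEmbed Q k y| ≤ S) :
    |∫ y, g y * (meanEmbed P k y - meanEmbed Q k y)|
      ≤ S * Real.sqrt (Real.pi ^ ((d : ℝ) / 2) * R ^ (d : ℕ) / Real.Gamma ((d : ℝ) / 2 + 1))
        + 2 * kernelTail k (a * R)
        + 2 * KL2 * max (measTail P (b * R)) (measTail Q (b * R)) := by
  classical
  haveI : Nonempty (Fin d) := ⟨⟨0, hd⟩⟩
  set B : Set (EuclideanSpace ℝ (Fin d)) := Metric.closedBall (0:EuclideanSpace ℝ (Fin d)) R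
    with hB
  have hBmeas : MeasurableSet B := measurableSet_closedBall
  have hKL2_0 : 0 ≤ KL2 := (Real.sqrt_nonneg _).trans (hKL2 0)
  have hτ0 : 0 ≤ kernelTail k (a * R) := Real.iSup_nonneg fun x => Real.sqrt_nonneg _
  have hS0 : 0 ≤ S := (abs_nonneg _).trans (hS 0)
  have hmax0 : 0 ≤ max (measTail P (b * R)) (measTail Q (b * R)) :=
    le_trans ENNReal.toReal_nonneg (le_max_left _ _)
  set F : EuclideanSpace ℝ (Fin d) → ℝ := fun y => meanEmbed P k y - meanEmbed Q k y with hF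
  have hPksm : StronglyMeasurable (meanEmbed P k) :=
    StronglyMeasurable.integral_prod_left (μ := P) hmeas.stronglyMeasurable
  have hQksm : StronglyMeasurable (meanEmbed Q k) :=
    StronglyMeasurable.integral_prod_left (μ := Q) hmeas.stronglyMeasurable
  have hFsm : StronglyMeasurable F := hPksm.sub hQksm
  by_cases hfi : Integrable (fun y => g y * F y) volume
  · -- volume of the ball
    have hΓpos : 0 < Real.Gamma ((d : ℝ) / 2 + 1) := Real.Gamma_pos_of_pos (by positivity)
    have hpos0 : (0:ℝ) ≤ Real.sqrt Real.pi ^ Fintype.card (Fin d)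
        / Real.Gamma (Fintype.card (Fin d) / 2 + 1) := by
      refine div_nonneg (pow_nonneg (Real.sqrt_nonneg _) _) ?_
      refine (Real.Gamma_pos_of_pos ?_).le
      have : (0:ℝ) < (Fintype.card (Fin d) : ℝ) / 2 + 1 := by positivity
      exact this
    have hvol : (volume B).toReal
        = Real.pi ^ ((d : ℝ) / 2) * R ^ (d : ℕ) / Real.Gamma ((d : ℝ) / 2 + 1) := by
      rw [hB, EuclideanSpace.volume_closedBall (Fin d) 0 R, ENNReal.toReal_mul,
        ENNReal.toReal_pow, ENNReal.toReal_ofReal hR, ENNReal.toReal_ofReal hpos0]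
      simp only [Fintype.card_fin]
      rw [Real.sqrt_eq_rpow, ← Real.rpow_natCast (Real.pi ^ (1/(2:ℝ))) d,
        ← Real.rpow_mul Real.pi_pos.le, show (1/(2:ℝ)) * (d:ℝ) = (d:ℝ)/2 by ring]
      ring
    -- L² facts for g
    have hgL2 : MemLp g 2 volume :=
      (memLp_two_iff_integrable_sq hgmeas.aestronglyMeasurable).2 hgsqint
    haveI : IsFiniteMeasure (volume.restrict B) :=
      ⟨by rw [Measure.restrict_apply_univ]; exact measure_closedBall_lt_top⟩
    have hgIntB : IntegrableOn g B volume :=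
      (hgL2.restrict B).integrable one_le_two
    -- Cauchy–Schwarz on the ball
    have hCS : ∫ y in B, |g y| ≤ Real.sqrt ((volume B).toReal) := by
      have habs : MemLp (fun y => |g y|) (ENNReal.ofReal 2) (volume.restrict B) := by
        rw [show ENNReal.ofReal 2 = 2 by norm_num]
        have := (hgL2.restrict B).norm
        simpa [Real.norm_eq_abs] using this
      have hone : MemLp (fun _ : EuclideanSpace ℝ (Fin d) => (1:ℝ)) (ENNReal.ofReal 2)
          (volume.restrict B) := by
        rw [show ENNReal.ofReal 2 = 2 by norm_num]
        exact memLp_const 1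
      have h := integral_mul_le_Lp_mul_Lq_of_nonneg (μ := volume.restrict B) aux_conj
        (Filter.Eventually.of_forall fun y => abs_nonneg (g y))
        (Filter.Eventually.of_forall fun _ => zero_le_one) habs hone
      simp only [mul_one] at h
      refine le_trans h ?_
      have e1 : ∀ y : EuclideanSpace ℝ (Fin d), |g y| ^ (2:ℝ) = g y ^ 2 := fun y => by
        rw [show (2:ℝ) = ((2:ℕ):ℝ) by norm_num, Real.rpow_natCast, sq_abs]
      have e2 : (∫ y in B, |g y| ^ (2:ℝ)) = ∫ y in B, g y ^ 2 := by
        simp_rw [e1]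
      have h3 : (∫ y in B, |g y| ^ (2:ℝ)) ^ (1/(2:ℝ)) ≤ 1 := by
        rw [e2]
        refine Real.rpow_le_one (integral_nonneg fun y => sq_nonneg _) ?_ (by norm_num)
        exact le_trans (setIntegral_le_integral hgsqint
          (Filter.Eventually.of_forall fun y => sq_nonneg _)) hg
      have h4 : (∫ y in B, (1:ℝ) ^ (2:ℝ)) ^ (1/(2:ℝ)) = Real.sqrt ((volume B).toReal) := by
        simp only [Real.one_rpow]
        rw [setIntegral_const, smul_eq_mul, mul_one, Real.sqrt_eq_rpow]
        rfl
      calc (∫ y in B, |g y| ^ (2:ℝ)) ^ (1/(2:ℝ)) * (∫ y in B, (1:ℝ) ^ (2:ℝ)) ^ (1/(2:ℝ))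
          ≤ 1 * Real.sqrt ((volume B).toReal) := by
            rw [h4]
            exact mul_le_mul_of_nonneg_right h3 (Real.sqrt_nonneg _)
        _ = Real.sqrt ((volume B).toReal) := one_mul _
    -- bound on the ball
    have htermB : |∫ y in B, g y * F y| ≤ S * Real.sqrt ((volume B).toReal) := by
      have h1 : |∫ y in B, g y * F y| ≤ ∫ y in B, |g y| * |F y| := by
        simpa [Real.norm_eq_abs, abs_mul] using
          norm_integral_le_integral_norm (fun y => g y * F y) (μ := volume.restrict B)
      have h2 : ∫ y in B, |g y| * |F y| ≤ ∫ y in B, S * |g y| := by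
        refine integral_mono_of_nonneg
          (Filter.Eventually.of_forall fun y => mul_nonneg (abs_nonneg _) (abs_nonneg _))
          (hgIntB.abs.const_mul S) (Filter.Eventually.of_forall fun y => ?_)
        show |g y| * |F y| ≤ S * |g y|
        rw [mul_comm]
        exact mul_le_mul_of_nonneg_right (hS y) (abs_nonneg _)
      have h3 : ∫ y in B, S * |g y| = S * ∫ y in B, |g y| := integral_const_mul S _
      calc |∫ y in B, g y * F y| ≤ ∫ y in B, S * |g y| := le_trans h1 h2
        _ = S * ∫ y in B, |g y| := h3
        _ ≤ S * Real.sqrt ((volume B).toReal) := mul_le_mul_of_nonneg_left hCS hS0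
    -- bound off the ball
    have hLP := aux_tail_bound k hmeas hL2int KL2 hKL2 P hPint g hgmeas hgsqint hg R a b hab
    have hLQ := aux_tail_bound k hmeas hL2int KL2 hKL2 Q hQint g hgmeas hgsqint hg R a b hab
    set CP : ℝ := kernelTail k (a * R) + KL2 * measTail P (b * R) with hCP
    set CQ : ℝ := kernelTail k (a * R) + KL2 * measTail Q (b * R) with hCQ
    have hCP0 : 0 ≤ CP := add_nonneg hτ0 (mul_nonneg hKL2_0 ENNReal.toReal_nonneg)
    have hCQ0 : 0 ≤ CQ := add_nonneg hτ0 (mul_nonneg hKL2_0 ENNReal.toReal_nonneg)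
    have htermC : |∫ y in Bᶜ, g y * F y| ≤ CP + CQ := by
      have h1 : |∫ y in Bᶜ, g y * F y|
          ≤ (∫⁻ y in Bᶜ, ENNReal.ofReal ‖g y * F y‖).toReal := by
        simpa [Real.norm_eq_abs] using
          norm_integral_le_lintegral_norm (μ := volume.restrict Bᶜ) (fun y => g y * F y)
      refine le_trans h1 ?_
      have h2 : ∫⁻ y in Bᶜ, ENNReal.ofReal ‖g y * F y‖
          ≤ ENNReal.ofReal CP + ENNReal.ofReal CQ := by
        have hmono : ∫⁻ y in Bᶜ, ENNReal.ofReal ‖g y * F y‖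
            ≤ ∫⁻ y in Bᶜ, (ENNReal.ofReal (|g y| * |meanEmbed P k y|)
              + ENNReal.ofReal (|g y| * |meanEmbed Q k y|)) := by
          refine lintegral_mono fun y => ?_
          have hy : ‖g y * F y‖ ≤ |g y| * |meanEmbed P k y| + |g y| * |meanEmbed Q k y| := by
            rw [Real.norm_eq_abs, abs_mul, ← mul_add]
            exact mul_le_mul_of_nonneg_left (abs_sub _ _) (abs_nonneg _)
          exact le_trans (ENNReal.ofReal_le_ofReal hy) ENNReal.ofReal_add_le
        refine le_trans hmono ?_
        rw [lintegral_add_left]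
        · exact add_le_add hLP hLQ
        · exact ENNReal.measurable_ofReal.comp (hgmeas.abs.mul hPksm.measurable.abs)
      rw [← ENNReal.ofReal_add hCP0 hCQ0] at h2
      exact ENNReal.toReal_le_of_le_ofReal (add_nonneg hCP0 hCQ0) h2
    -- combine
    have hsplit : ∫ y, g y * F y = (∫ y in B, g y * F y) + ∫ y in Bᶜ, g y * F y :=
      (integral_add_compl hBmeas hfi).symm
    have htri : |∫ y, g y * F y| ≤ |∫ y in B, g y * F y| + |∫ y in Bᶜ, g y * F y| := by
      rw [hsplit]; exact abs_add_le _ _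
    have hmaxP : measTail P (b * R) ≤ max (measTail P (b * R)) (measTail Q (b * R)) :=
      le_max_left _ _
    have hmaxQ : measTail Q (b * R) ≤ max (measTail P (b * R)) (measTail Q (b * R)) :=
      le_max_right _ _
    have hKP : KL2 * measTail P (b * R) ≤ KL2 * max (measTail P (b * R)) (measTail Q (b * R)) :=
      mul_le_mul_of_nonneg_left hmaxP hKL2_0
    have hKQ : KL2 * measTail Q (b * R) ≤ KL2 * max (measTail P (b * R)) (measTail Q (b * R)) :=
      mul_le_mul_of_nonneg_left hmaxQ hKL2_0
    rw [← hvol]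
    calc |∫ y, g y * F y| ≤ |∫ y in B, g y * F y| + |∫ y in Bᶜ, g y * F y| := htri
      _ ≤ S * Real.sqrt ((volume B).toReal) + (CP + CQ) := add_le_add htermB htermC
      _ ≤ S * Real.sqrt ((volume B).toReal) + 2 * kernelTail k (a * R)
          + 2 * KL2 * max (measTail P (b * R)) (measTail Q (b * R)) := by
        rw [hCP, hCQ]; linarith
  · rw [integral_undef hfi]
    simp only [abs_zero]
    have h1 : 0 ≤ S * Real.sqrt (Real.pi ^ ((d : ℝ) / 2) * R ^ (d : ℕ)
        / Real.Gamma ((d : ℝ) / 2 + 1)) := mul_nonneg hS0 (Real.sqrt_nonneg _)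
    have h2 : 0 ≤ 2 * kernelTail k (a * R) := by linarith
    have h3 : 0 ≤ 2 * KL2 * max (measTail P (b * R)) (measTail Q (b * R)) := by
      have := mul_nonneg hKL2_0 hmax0; linarith
    linarith
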